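/- Let w₁, w₂ be a fundamental system of solutions of the linear ODE w'' + q(y)w = 0 with constant Wronskian W = w₁w₂' - w₁'w₂ ≠ 0, and let A = (A_{ij}) be a real symmetric 2×2 matrix with det(A)·W² = -k² for a constant k > 0. If the quadratic form Σ_{i,j} A_{ij} w_i(y) w_j(y) is positive on an interval, then w(y) = √(Σ_{i,j} A_{ij} w_i(y) w_j(y)) solves the nonlinear equation w'' + q(y) w = -k²·w^{-3} on that interval. -/

import Mathlib

open Set

/-- Ermakov–Pinney: `w = √(Σ A_{ij} wᵢ wⱼ)` solves `w'' + q w = -k² w⁻³`. -/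
theorem stmt9
    (I : Set ℝ) (hI : IsOpen I) (q : ℝ → ℝ) (hq : ContinuousOn q I)
    (w₁ w₂ : ℝ → ℝ)
    (hw₁ : ContDiffOn ℝ 2 w₁ I) (hw₂ : ContDiffOn ℝ 2 w₂ I)
    (hode₁ : ∀ y ∈ I, deriv (deriv w₁) y + q y * w₁ y = 0)
    (hode₂ : ∀ y ∈ I, deriv (deriv w₂) y + q y * w₂ y = 0)
    (W : ℝ) (hW : W ≠ 0)
    (hWr : ∀ y ∈ I, w₁ y * deriv w₂ y - deriv w₁ y * w₂ y = W)
    (A : Matrix (Fin 2) (Fin 2) ℝ) (hAsym : A.IsSymm)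
    (k : ℝ) (hk : 0 < k) (hdet : A.det * W ^ 2 = -k ^ 2)
    (F : ℝ → ℝ)
    (hF : ∀ y, F y = A 0 0 * w₁ y * w₁ y + A 0 1 * w₁ y * w₂ y
        + A 1 0 * w₂ y * w₁ y + A 1 1 * w₂ y * w₂ y)
    (hFpos : ∀ y ∈ I, 0 < F y) :
    ∀ y ∈ I,
      deriv (deriv fun s => Real.sqrt (F s)) y + q y * Real.sqrt (F y)
        = -k ^ 2 / Real.sqrt (F y) ^ 3 := by
  have hba : A 1 0 = A 0 1 := hAsym.apply 0 1
  set a := A 0 0 with ha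
  set b := A 0 1 with hb
  set c := A 1 1 with hc
  -- first derivatives exist
  have h1 : ∀ s ∈ I, HasDerivAt w₁ (deriv w₁ s) s := fun s hs =>
    ((hw₁.differentiableOn (by norm_num)).differentiableAt (hI.mem_nhds hs)).hasDerivAt
  have h2 : ∀ s ∈ I, HasDerivAt w₂ (deriv w₂ s) s := fun s hs =>
    ((hw₂.differentiableOn (by norm_num)).differentiableAt (hI.mem_nhds hs)).hasDerivAt
  have hw₁' : ContDiffOn ℝ 1 (deriv w₁) I := hw₁.deriv_of_isOpen hI (by norm_num)
  have hw₂' : ContDiffOn ℝ 1 (deriv w₂) I := hw₂.deriv_of_isOpen hI (by norm_num)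
  have hu1 : ∀ s ∈ I, HasDerivAt (deriv w₁) (deriv (deriv w₁) s) s := fun s hs =>
    ((hw₁'.differentiableOn (by norm_num)).differentiableAt (hI.mem_nhds hs)).hasDerivAt
  have hu2 : ∀ s ∈ I, HasDerivAt (deriv w₂) (deriv (deriv w₂) s) s := fun s hs =>
    ((hw₂'.differentiableOn (by norm_num)).differentiableAt (hI.mem_nhds hs)).hasDerivAt
  set G : ℝ → ℝ := fun s =>
    a * (deriv w₁ s * w₁ s) + b * (deriv w₁ s * w₂ s + w₁ s * deriv w₂ s)
      + c * (deriv w₂ s * w₂ s) with hGdef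
  -- derivative of F
  have hFderiv : ∀ s ∈ I, HasDerivAt F (2 * G s) s := by
    intro s hs
    have hbase : HasDerivAt
        (fun t => a * w₁ t * w₁ t + b * w₁ t * w₂ t + b * w₂ t * w₁ t + c * w₂ t * w₂ t)
        (2 * G s) s := by
      have := ((((h1 s hs).const_mul a).mul (h1 s hs)).add
          (((h1 s hs).const_mul b).mul (h2 s hs))).add
          ((((h2 s hs).const_mul b).mul (h1 s hs)).add
          (((h2 s hs).const_mul c).mul (h2 s hs)))
      refine HasDerivAt.congr_deriv (this.congr_of_eventuallyEq (Filter.Eventually.of_forall fun t => ?_)) ?_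
      · simp only [Pi.add_apply, Pi.mul_apply]; ring
      · show _ = 2 * (a * (deriv w₁ s * w₁ s) + b * (deriv w₁ s * w₂ s + w₁ s * deriv w₂ s) + c * (deriv w₂ s * w₂ s)); ring
    exact hbase.congr_of_eventuallyEq
      (Filter.Eventually.of_forall (fun t => by rw [hF t, hba]))
  intro y hy
  have hSpos : 0 < Real.sqrt (F y) := Real.sqrt_pos.2 (hFpos y hy)
  have hSne : Real.sqrt (F y) ≠ 0 := hSpos.ne'
  have hsqrt : ∀ s ∈ I, HasDerivAt (fun t => Real.sqrt (F t)) (G s / Real.sqrt (F s)) s := by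
    intro s hs
    have := (hFderiv s hs).sqrt (hFpos s hs).ne'
    have hs0 : Real.sqrt (F s) ≠ 0 := (Real.sqrt_pos.2 (hFpos s hs)).ne'
    convert this using 1
    field_simp
  have hev : (deriv fun s => Real.sqrt (F s)) =ᶠ[nhds y] fun s => G s / Real.sqrt (F s) :=
    Filter.eventuallyEq_of_mem (hI.mem_nhds hy) (fun s hs => (hsqrt s hs).deriv)
  rw [hev.deriv_eq]
  -- derivative of G at y
  have hG : HasDerivAt G
      (a * (deriv (deriv w₁) y * w₁ y + deriv w₁ y * deriv w₁ y)
        + b * ((deriv (deriv w₁) y * w₂ y + deriv w₁ y * deriv w₂ y)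
            + (deriv w₁ y * deriv w₂ y + w₁ y * deriv (deriv w₂) y))
        + c * (deriv (deriv w₂) y * w₂ y + deriv w₂ y * deriv w₂ y)) y := by
    exact ((((hu1 y hy).mul (h1 y hy)).const_mul a).add
        ((((hu1 y hy).mul (h2 y hy)).add ((h1 y hy).mul (hu2 y hy))).const_mul b)).add
        (((hu2 y hy).mul (h2 y hy)).const_mul c)
  have hquot := hG.div (hsqrt y hy) hSne
  rw [show (fun s => G s / Real.sqrt (F s)) = (G / fun t => Real.sqrt (F t)) from rfl, hquot.deriv]
  set D := a * (deriv (deriv w₁) y * w₁ y + deriv w₁ y * deriv w₁ y)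
        + b * ((deriv (deriv w₁) y * w₂ y + deriv w₁ y * deriv w₂ y)
            + (deriv w₁ y * deriv w₂ y + w₁ y * deriv (deriv w₂) y))
        + c * (deriv (deriv w₂) y * w₂ y + deriv w₂ y * deriv w₂ y) with hDdef
  -- algebraic identities
  have e1 : deriv (deriv w₁) y = -(q y * w₁ y) := by linarith [hode₁ y hy]
  have e2 : deriv (deriv w₂) y = -(q y * w₂ y) := by linarith [hode₂ y hy]
  rw [Matrix.det_fin_two, hba, ← hWr y hy] at hdet
  have key : D * F y - G y ^ 2 + q y * F y ^ 2 = -k ^ 2 := by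
    rw [hDdef, hGdef, hF y, hba, e1, e2]
    linear_combination hdet
  have hS2 : Real.sqrt (F y) ^ 2 = F y := Real.sq_sqrt (hFpos y hy).le
  have step : (D * Real.sqrt (F y) - G y * (G y / Real.sqrt (F y))) / Real.sqrt (F y) ^ 2
      + q y * Real.sqrt (F y)
      = (D * F y - G y ^ 2 + q y * F y ^ 2) / Real.sqrt (F y) ^ 3 := by
    rw [← hS2]
    field_simp
    rw [Real.sqrt_sq hSpos.le]
  rw [step, key]
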